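/- Fix 0 < δ ≤ 0.1 and a positive integer n with nδ ≥ 2. On the vertex set {x_1, …, x_n, y_1, …, y_n}, define μ by μ(x_i, x_j) = μ(y_i, y_j) = e^{−δ|i−j|}, μ(x_i, y_j) = μ(y_j, x_i) = e^{−δ|i−j| − 2δ}, and μ(u, u) = 1 (these are the pairwise correlations of the distribution P from the Chow-Liu counterexample construction). Let T be any tree on this vertex set whose edge set is {{x_i, x_{i+1}} : i < n} ∪ {{y_i, y_{i+1}} : i < n} ∪ {{x_{i₀}, y_{j₀}}} for some i₀, j₀ ∈ [n]. Then for every symmetric function ν that is multiplicative along T and satisfies |ν(u, v)| ≤ 1 for all u, v, one has max_{u,v} |ν(u, v) − μ(u, v)| ≥ 0.1. (Equivalently, every tree-structured distribution with unbiased ±1 marginals whose underlying tree is T has local total variation distance of order 2 at least 0.05 from P.) -/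

import Mathlib

open SimpleGraph

/-- A symmetric function `ν` is multiplicative along a graph `T` if `ν u u = 1` and `ν u v`
is the product of `ν` over the edges of any (hence, in a tree, the unique) path from `u` to
`v`. -/
def MultAlong {V : Type*} (G : SimpleGraph V) (ν : V → V → ℝ) : Prop :=
  (∀ u : V, ν u u = 1) ∧
  ∀ (u v : V) (p : G.Walk u v), p.IsPath →
    ν u v = (p.darts.map fun d => ν d.fst d.snd).prod

/-- The set of consecutive edges `{x_i, x_{i+1}}` and `{y_i, y_{i+1}}` on the vertex set
`{x_1, …, x_n} ⊔ {y_1, …, y_n}` (with `x`'s on the left, `y`'s on the right). -/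
def pathEdges (n : ℕ) : Set (Sym2 (Fin n ⊕ Fin n)) :=
  {e | ∃ (i : Fin n) (h : (i : ℕ) + 1 < n),
      e = s(Sum.inl i, Sum.inl ⟨(i : ℕ) + 1, h⟩) ∨
      e = s(Sum.inr i, Sum.inr ⟨(i : ℕ) + 1, h⟩)}

/-- A walk along a chain of consecutively-adjacent vertices, with explicit support. -/
lemma chain_walk_support {V : Type*} (G : SimpleGraph V) (f : ℕ → V) (a : ℕ) :
    ∀ b : ℕ, a ≤ b → (∀ k, a ≤ k → k < b → G.Adj (f k) (f (k + 1))) →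
      ∃ p : G.Walk (f a) (f b), p.support = (List.range' a (b + 1 - a)).map f := by
  intro b hb
  induction b, hb using Nat.le_induction with
  | base =>
    intro _
    refine ⟨Walk.nil, ?_⟩
    have : a + 1 - a = 1 := by omega
    simp [this]
  | succ b hab ih =>
    intro hadj
    obtain ⟨p, hp⟩ := ih (fun k hk1 hk2 => hadj k hk1 (Nat.lt_succ_of_lt hk2))
    refine ⟨p.concat (hadj b hab (Nat.lt_succ_self b)), ?_⟩
    rw [Walk.support_concat, hp]
    have h1 : b + 1 + 1 - a = (b + 1 - a) + 1 := by omega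
    have h2 : a + (b + 1 - a) = b + 1 := by omega
    rw [h1, List.range'_1_concat, h2, List.map_append]
    simp

/-- Existence of a nodup-support walk between two points of a chain. -/
lemma exists_walk_nodup {V : Type*} (G : SimpleGraph V) (f : ℕ → V) (N a b : ℕ)
    (ha : a < N) (hb : b < N)
    (hadj : ∀ k, k + 1 < N → G.Adj (f k) (f (k + 1)))
    (hinj : ∀ k l, k < N → l < N → f k = f l → k = l) :
    ∃ p : G.Walk (f a) (f b), p.support.Nodup ∧ ∀ v ∈ p.support, ∃ k, k < N ∧ v = f k := by
  have key : ∀ a b : ℕ, a < N → b < N → a ≤ b →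
      ∃ p : G.Walk (f a) (f b), p.support.Nodup ∧ ∀ v ∈ p.support, ∃ k, k < N ∧ v = f k := by
    intro a b ha hb hab
    obtain ⟨p, hp⟩ := chain_walk_support G f a b hab (fun k _ hk2 => hadj k (by omega))
    refine ⟨p, ?_, ?_⟩
    · rw [hp]
      refine (List.nodup_range' (s := a) (n := b + 1 - a)).map_on ?_
      intro x hx y hy hxy
      rw [List.mem_range'_1] at hx hy
      exact hinj x y (by omega) (by omega) hxy
    · intro v hv
      rw [hp, List.mem_map] at hv
      obtain ⟨k, hk, rfl⟩ := hv
      rw [List.mem_range'_1] at hk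
      exact ⟨k, by omega, rfl⟩
  rcases le_total a b with h | h
  · exact key a b ha hb h
  · obtain ⟨p, h1, h2⟩ := key b a hb ha h
    refine ⟨p.reverse, ?_, ?_⟩
    · rw [Walk.support_reverse]; exact List.nodup_reverse.mpr h1
    · intro v hv
      rw [Walk.support_reverse, List.mem_reverse] at hv
      exact h2 v hv

/-- **Any tree model on a Chow-Liu output tree is far from the counterexample `P`.** Let
`0 < δ ≤ 0.1`, `nδ ≥ 2`, and let `μ` be the pairwise correlations of the counterexample
distribution: `μ(x_i,x_j) = μ(y_i,y_j) = e^{−δ|i−j|}`, `μ(x_i,y_j) = e^{−δ|i−j|−2δ}`. Let `T`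
be any tree whose edges are the two paths `x_1, …, x_n` and `y_1, …, y_n` together with a
single cross edge `{x_{i₀}, y_{j₀}}`. Then every symmetric function `ν` multiplicative along
`T` and bounded by `1` in absolute value satisfies `max_{u,v} |ν(u,v) − μ(u,v)| ≥ 0.1`. -/
theorem chow_liu_tree_models_far_from_P
    (δ : ℝ) (hδ0 : 0 < δ) (hδ1 : δ ≤ 0.1) (n : ℕ) (hnδ : 2 ≤ (n : ℝ) * δ)
    (μ : (Fin n ⊕ Fin n) → (Fin n ⊕ Fin n) → ℝ)
    (hxx : ∀ i j : Fin n, μ (Sum.inl i) (Sum.inl j) =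
      Real.exp (-δ * |((i : ℕ) : ℝ) - ((j : ℕ) : ℝ)|))
    (hyy : ∀ i j : Fin n, μ (Sum.inr i) (Sum.inr j) =
      Real.exp (-δ * |((i : ℕ) : ℝ) - ((j : ℕ) : ℝ)|))
    (hxy : ∀ i j : Fin n, μ (Sum.inl i) (Sum.inr j) =
      Real.exp (-δ * |((i : ℕ) : ℝ) - ((j : ℕ) : ℝ)| - 2 * δ))
    (hyx : ∀ i j : Fin n, μ (Sum.inr j) (Sum.inl i) =
      Real.exp (-δ * |((i : ℕ) : ℝ) - ((j : ℕ) : ℝ)| - 2 * δ))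
    (i₀ j₀ : Fin n)
    (T : SimpleGraph (Fin n ⊕ Fin n)) (hT : T.IsTree)
    (hTedges : T.edgeSet = pathEdges n ∪ {s(Sum.inl i₀, Sum.inr j₀)})
    (ν : (Fin n ⊕ Fin n) → (Fin n ⊕ Fin n) → ℝ)
    (hνsymm : ∀ u v, ν u v = ν v u)
    (hνmult : MultAlong T ν)
    (hνle : ∀ u v, |ν u v| ≤ 1) :
    ∃ u v : Fin n ⊕ Fin n, (0.1 : ℝ) ≤ |ν u v - μ u v| := by
  by_contra hcon
  push_neg at hcon
  have hn : 0 < n := by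
    rcases Nat.eq_zero_or_pos n with h | h
    · subst h; norm_num at hnδ
    · exact h
  -- chain functions for the x-side and y-side
  set f : ℕ → (Fin n ⊕ Fin n) := fun k => Sum.inl ⟨k % n, Nat.mod_lt _ hn⟩ with hf
  set g : ℕ → (Fin n ⊕ Fin n) := fun k => Sum.inr ⟨k % n, Nat.mod_lt _ hn⟩ with hg
  have hfe : ∀ m : Fin n, f (m : ℕ) = Sum.inl m := by
    intro m
    simp only [hf]
    congr 1
    exact Fin.ext (Nat.mod_eq_of_lt m.isLt)
  have hge : ∀ m : Fin n, g (m : ℕ) = Sum.inr m := by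
    intro m
    simp only [hg]
    congr 1
    exact Fin.ext (Nat.mod_eq_of_lt m.isLt)
  have hadjx : ∀ k, k + 1 < n → T.Adj (f k) (f (k + 1)) := by
    intro k hk
    rw [← SimpleGraph.mem_edgeSet, hTedges]
    left
    refine ⟨⟨k, by omega⟩, hk, Or.inl ?_⟩
    simp only [hf]
    simp only [Nat.mod_eq_of_lt (by omega : k < n), Nat.mod_eq_of_lt hk]
  have hadjy : ∀ k, k + 1 < n → T.Adj (g k) (g (k + 1)) := by
    intro k hk
    rw [← SimpleGraph.mem_edgeSet, hTedges]
    left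
    refine ⟨⟨k, by omega⟩, hk, Or.inr ?_⟩
    simp only [hg]
    simp only [Nat.mod_eq_of_lt (by omega : k < n), Nat.mod_eq_of_lt hk]
  have hinjf : ∀ k l, k < n → l < n → f k = f l → k = l := by
    intro k l hk hl h
    simp only [hf, Sum.inl.injEq, Fin.mk.injEq] at h
    rwa [Nat.mod_eq_of_lt hk, Nat.mod_eq_of_lt hl] at h
  have hinjg : ∀ k l, k < n → l < n → g k = g l → k = l := by
    intro k l hk hl h
    simp only [hg, Sum.inr.injEq, Fin.mk.injEq] at h
    rwa [Nat.mod_eq_of_lt hk, Nat.mod_eq_of_lt hl] at h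
  have hcross : T.Adj (Sum.inl i₀) (Sum.inr j₀) := by
    rw [← SimpleGraph.mem_edgeSet, hTedges]
    right
    rfl
  -- choose i far from i₀
  obtain ⟨i, hdist⟩ : ∃ i : Fin n, (0.95 : ℝ) ≤ δ * |((i : ℕ) : ℝ) - ((i₀ : ℕ) : ℝ)| := by
    have hbase : (0.95 : ℝ) ≤ δ * (((n : ℝ) - 1) / 2) := by nlinarith
    by_cases hc : 2 * (i₀ : ℕ) + 1 ≤ n
    · refine ⟨⟨n - 1, by omega⟩, ?_⟩
      have h1 : (((⟨n - 1, by omega⟩ : Fin n) : ℕ) : ℝ) = (n : ℝ) - 1 := by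
        push_cast [Nat.cast_sub hn]
        ring
      rw [h1]
      have h2 : ((i₀ : ℕ) : ℝ) ≤ ((n : ℝ) - 1) / 2 := by
        have : ((2 * (i₀ : ℕ) + 1 : ℕ) : ℝ) ≤ (n : ℕ) := Nat.cast_le.mpr hc
        push_cast at this
        linarith
      have h3 : ((n : ℝ) - 1) / 2 ≤ (n : ℝ) - 1 - ((i₀ : ℕ) : ℝ) := by linarith
      rw [abs_of_nonneg (by linarith [h2, h3] : (0:ℝ) ≤ (n : ℝ) - 1 - ((i₀ : ℕ) : ℝ))]
      nlinarith
    · refine ⟨⟨0, hn⟩, ?_⟩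
      push_neg at hc
      have h2 : ((n : ℝ) - 1) / 2 ≤ ((i₀ : ℕ) : ℝ) := by
        have : ((n : ℕ) : ℝ) ≤ ((2 * (i₀ : ℕ) : ℕ) : ℝ) := Nat.cast_le.mpr (by omega)
        push_cast at this
        linarith
      have h1 : (((⟨0, hn⟩ : Fin n) : ℕ) : ℝ) = 0 := by norm_num
      rw [h1, zero_sub, abs_neg, abs_of_nonneg (Nat.cast_nonneg _)]
      nlinarith
  -- construct the walks
  obtain ⟨px0, hpxnd, hpxmem⟩ := exists_walk_nodup T f n (i : ℕ) (i₀ : ℕ) i.isLt i₀.isLt hadjx hinjf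
  obtain ⟨py0, hpynd, hpymem⟩ := exists_walk_nodup T g n (j₀ : ℕ) (i : ℕ) j₀.isLt i.isLt hadjy hinjg
  set px : T.Walk (Sum.inl i) (Sum.inl i₀) := px0.copy (hfe i) (hfe i₀) with hpx
  set py : T.Walk (Sum.inr j₀) (Sum.inr i) := py0.copy (hge j₀) (hge i) with hpy
  have hpxs : px.support = px0.support := Walk.support_copy _ _ _
  have hpys : py.support = py0.support := Walk.support_copy _ _ _
  set W : T.Walk (Sum.inl i) (Sum.inr i) := px.append (Walk.cons hcross py) with hW
  have hWsupp : W.support = px.support ++ py.support := by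
    rw [hW, Walk.support_append, Walk.support_cons]
    rfl
  have hpxpath : px.IsPath := by rw [Walk.isPath_def, hpxs]; exact hpxnd
  have hpypath : py.IsPath := by rw [Walk.isPath_def, hpys]; exact hpynd
  have hWpath : W.IsPath := by
    rw [Walk.isPath_def, hWsupp]
    refine List.Nodup.append (hpxs ▸ hpxnd) (hpys ▸ hpynd) ?_
    intro v hv1 hv2
    rw [hpxs] at hv1
    rw [hpys] at hv2
    obtain ⟨k, -, rfl⟩ := hpxmem v hv1
    obtain ⟨l, -, hvl⟩ := hpymem _ hv2
    simp only [hf, hg] at hvl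
    exact Sum.inl_ne_inr hvl
  -- multiplicativity
  have hWdarts : W.darts = px.darts ++
      (⟨(Sum.inl i₀, Sum.inr j₀), hcross⟩ :: py.darts) := by
    rw [hW, Walk.darts_append, Walk.darts_cons]
  have hmain : ν (Sum.inl i) (Sum.inr i) =
      ν (Sum.inl i) (Sum.inl i₀) * (ν (Sum.inl i₀) (Sum.inr j₀) * ν (Sum.inr j₀) (Sum.inr i)) := by
    have h1 := hνmult.2 _ _ W hWpath
    have h2 := hνmult.2 _ _ px hpxpath
    have h3 := hνmult.2 _ _ py hpypath
    rw [hWdarts, List.map_append, List.prod_append, List.map_cons, List.prod_cons] at h1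
    rw [h1, ← h2, ← h3]
  -- numerics
  have hA := hcon (Sum.inl i) (Sum.inl i₀)
  rw [hxx] at hA
  have hB := hcon (Sum.inl i) (Sum.inr i)
  rw [hxy] at hB
  set E1 : ℝ := Real.exp (-δ * |((i : ℕ) : ℝ) - ((i₀ : ℕ) : ℝ)|) with hE1
  have hE1le : E1 ≤ 1 / 1.95 := by
    rw [hE1, show -δ * |((i : ℕ) : ℝ) - ((i₀ : ℕ) : ℝ)| =
      -(δ * |((i : ℕ) : ℝ) - ((i₀ : ℕ) : ℝ)|) by ring, Real.exp_neg]
    rw [one_div]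
    refine inv_anti₀ (by norm_num) ?_
    have := Real.add_one_le_exp (δ * |((i : ℕ) : ℝ) - ((i₀ : ℕ) : ℝ)|)
    linarith
  have hE2 : (0.8 : ℝ) ≤ Real.exp (-δ * |((i : ℕ) : ℝ) - ((i : ℕ) : ℝ)| - 2 * δ) := by
    rw [sub_self, abs_zero, mul_zero, zero_sub]
    have := Real.add_one_le_exp (-(2 * δ))
    linarith
  have hAabs : |ν (Sum.inl i) (Sum.inl i₀)| ≤ E1 + 0.1 := by
    have h1 : |ν (Sum.inl i) (Sum.inl i₀)| - |E1| ≤ |ν (Sum.inl i) (Sum.inl i₀) - E1| :=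
      abs_sub_abs_le_abs_sub _ _
    have h2 : |E1| = E1 := abs_of_pos (Real.exp_pos _)
    linarith [hA]
  have hBabs : |ν (Sum.inl i) (Sum.inr i)| ≤ E1 + 0.1 := by
    rw [hmain, abs_mul, abs_mul]
    have h1 := hνle (Sum.inl i₀) (Sum.inr j₀)
    have h2 := hνle (Sum.inr j₀) (Sum.inr i)
    have h3 := abs_nonneg (ν (Sum.inl i) (Sum.inl i₀))
    have h4 := abs_nonneg (ν (Sum.inl i₀) (Sum.inr j₀))
    have h5 := abs_nonneg (ν (Sum.inr j₀) (Sum.inr i))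
    have h6 : |ν (Sum.inl i₀) (Sum.inr j₀)| * |ν (Sum.inr j₀) (Sum.inr i)| ≤ 1 :=
      mul_le_one₀ h1 h5 h2
    calc |ν (Sum.inl i) (Sum.inl i₀)| * (|ν (Sum.inl i₀) (Sum.inr j₀)| * |ν (Sum.inr j₀) (Sum.inr i)|)
        ≤ |ν (Sum.inl i) (Sum.inl i₀)| * 1 := by
          exact mul_le_mul_of_nonneg_left h6 h3
      _ = |ν (Sum.inl i) (Sum.inl i₀)| := mul_one _
      _ ≤ E1 + 0.1 := hAabs
  -- combine
  have hfinal : Real.exp (-δ * |((i : ℕ) : ℝ) - ((i : ℕ) : ℝ)| - 2 * δ)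
      - ν (Sum.inl i) (Sum.inr i) < 0.1 := by
    have := neg_abs_le (ν (Sum.inl i) (Sum.inr i) -
      Real.exp (-δ * |((i : ℕ) : ℝ) - ((i : ℕ) : ℝ)| - 2 * δ))
    linarith [hB]
  have hν2 : ν (Sum.inl i) (Sum.inr i) ≤ E1 + 0.1 := le_trans (le_abs_self _) hBabs
  linarith
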